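/- Assume in addition that b ∈ (0,1]. Then for every fixed k = 1, 2, ..., the quantity ρ_k(δ) := (leb(A_{(k+1)δ} \ A) − 2·leb(A_{kδ} \ A) + leb(A_{(k−1)δ} \ A)) / (bδ + 2·leb(A_δ \ A)) tends to 0 both as δ → 0+ and as δ → ∞. -/

import Mathlib

open MeasureTheory Set Filter

/-- Assume `b ∈ (0,1]`.  For every fixed `k = 1, 2, ...`, the lag-`k`
autocorrelation
`ρ_k(δ) = (leb(A_{(k+1)δ} \ A) − 2 leb(A_{kδ} \ A) + leb(A_{(k−1)δ} \ A)) / (bδ + 2 leb(A_δ \ A))`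
tends to `0` both as `δ → 0+` and as `δ → ∞`. -/
theorem autocorrelation_limits
    (b : ℝ) (hb : b ∈ Set.Icc (0:ℝ) 1) (hb' : 0 < b)
    (d : ℝ → ℝ)
    (hd_cont : ContinuousOn d (Set.Iic 0))
    (hd_mono : MonotoneOn d (Set.Iic 0))
    (hd_range : ∀ s ≤ (0:ℝ), d s ∈ Set.Icc b 1)
    (hd0 : d 0 = 1)
    (hd_lim : Filter.Tendsto d Filter.atBot (nhds b))
    (hd_int : MeasureTheory.IntegrableOn (fun s => d s - b) (Set.Iic 0))
    (A : ℝ → Set (ℝ × ℝ))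
    (hA : ∀ t, A t = {p : ℝ × ℝ | p.2 ≤ t ∧ b ≤ p.1 ∧ p.1 < d (p.2 - t)})
    (F : ℝ → ℝ)
    (hF : ∀ t, F t = (volume (A t \ A 0)).toReal)
    (ρ : ℕ → ℝ → ℝ)
    (hρ : ∀ k : ℕ, ∀ δ : ℝ,
      ρ k δ = (F (((k:ℝ)+1)*δ) - 2 * F ((k:ℝ)*δ) + F (((k:ℝ)-1)*δ)) / (b * δ + 2 * F δ)) :
    ∀ k : ℕ, 1 ≤ k →
      Filter.Tendsto (ρ k) (nhdsWithin 0 (Set.Ioi 0)) (nhds 0) ∧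
      Filter.Tendsto (ρ k) Filter.atTop (nhds 0) := by
  intro k hk
  have hK1 : (1:ℝ) ≤ (k:ℝ) := by exact_mod_cast hk
  -- the (shifted) trawl function extended monotonically and continuously to all of ℝ
  set g : ℝ → ℝ := fun u => d (min u 0) - b with hg_def
  have hgmono : Monotone g := by
    intro u v huv
    exact sub_le_sub_right
      (hd_mono (min_le_right u 0) (min_le_right v 0) (min_le_min huv le_rfl)) b
  have hgcont : Continuous g := by
    have h1 : Continuous fun u : ℝ => d (min u 0) :=
      hd_cont.comp_continuous (continuous_id.min continuous_const) fun x => min_le_right x 0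
    exact h1.sub continuous_const
  have hg0 : ∀ u, 0 ≤ g u := fun u => sub_nonneg.mpr (hd_range _ (min_le_right u 0)).1
  have hg1 : ∀ u, g u ≤ 1 - b := fun u => sub_le_sub_right (hd_range _ (min_le_right u 0)).2 b
  have hgzero : g 0 = 1 - b := by simp [hg_def, hd0]
  have hgeq : ∀ u ≤ (0:ℝ), g u = d u - b := fun u hu => by simp [hg_def, min_eq_left hu]
  have hgint : IntegrableOn g (Iic 0) :=
    hd_int.congr_fun (fun u hu => (hgeq u hu).symm) measurableSet_Iic
  set C : ℝ := ∫ u in Iic 0, g u with hC_def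
  have hCnn : 0 ≤ C := setIntegral_nonneg measurableSet_Iic fun u _ => hg0 u
  -- F coincides with the integral of g over (-t, 0] for t ≥ 0
  have hFG : ∀ t : ℝ, 0 ≤ t → F t = ∫ u in Ioc (-t) 0, g u := by
    intro t ht
    have hsub : ∀ {s : ℝ}, s ≤ t → min (s - t) 0 = s - t := fun {s} hs =>
      min_eq_left (by linarith)
    have hset : A t \ A 0 = {p : ℝ × ℝ | p.2 ∈ Ioc 0 t ∧ p.1 ∈ Ico b (b + g (p.2 - t))} := by
      ext ⟨x, s⟩
      simp only [hA, mem_diff, mem_setOf_eq, mem_Ioc, mem_Ico, not_and, not_lt]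
      constructor
      · rintro ⟨⟨hst, hbx, hxd⟩, hnot⟩
        have hs0 : 0 < s := by
          by_contra h
          push_neg at h
          have hmono := hd_mono (show s - t ∈ Iic 0 from by
            simp only [mem_Iic]; linarith) (show s ∈ Iic 0 from h) (by linarith)
          have h2 := hnot h hbx
          rw [sub_zero] at h2
          linarith
        have hgd : g (s - t) = d (s - t) - b := by
          simp only [hg_def, hsub hst]
        exact ⟨⟨hs0, hst⟩, hbx, by linarith⟩
      · rintro ⟨⟨hs0, hst⟩, hbx, hxg⟩
        have hgd : g (s - t) = d (s - t) - b := by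
          simp only [hg_def, hsub hst]
        exact ⟨⟨hst, hbx, by linarith⟩, fun h => absurd h (not_le.mpr hs0)⟩
    have hTm : MeasurableSet {p : ℝ × ℝ | p.2 ∈ Ioc 0 t ∧ p.1 ∈ Ico b (b + g (p.2 - t))} := by
      have h1 : MeasurableSet {p : ℝ × ℝ | p.2 ∈ Ioc 0 t} :=
        measurable_snd measurableSet_Ioc
      have h2 : MeasurableSet {p : ℝ × ℝ | b ≤ p.1} :=
        measurableSet_le measurable_const measurable_fst
      have h3 : MeasurableSet {p : ℝ × ℝ | p.1 < b + g (p.2 - t)} :=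
        measurableSet_lt measurable_fst
          (measurable_const.add
            (hgcont.comp (continuous_snd.sub continuous_const)).measurable)
      have he : {p : ℝ × ℝ | p.2 ∈ Ioc 0 t ∧ p.1 ∈ Ico b (b + g (p.2 - t))}
          = {p : ℝ × ℝ | p.2 ∈ Ioc 0 t} ∩
            ({p : ℝ × ℝ | b ≤ p.1} ∩ {p : ℝ × ℝ | p.1 < b + g (p.2 - t)}) := by
        ext p; simp [mem_Ico, and_assoc]
      rw [he]; exact h1.inter (h2.inter h3)
    have hint : IntegrableOn (fun s => g (s - t)) (Ioc 0 t) volume :=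
      (hgcont.comp (continuous_id.sub continuous_const)).integrableOn_Ioc
    have hfib : ∀ s : ℝ,
        ((fun x => (x, s)) ⁻¹' {p : ℝ × ℝ | p.2 ∈ Ioc 0 t ∧ p.1 ∈ Ico b (b + g (p.2 - t))})
          = if s ∈ Ioc 0 t then Ico b (b + g (s - t)) else (∅ : Set ℝ) := by
      intro s; ext x
      by_cases hs : s ∈ Ioc 0 t
      · rw [if_pos hs]
        simp only [mem_preimage, mem_setOf_eq, hs, true_and]
      · simp only [if_neg hs, mem_preimage, mem_setOf_eq, mem_empty_iff_false, iff_false]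
        exact fun h => hs h.1
    have hvol : volume (A t \ A 0) = ENNReal.ofReal (∫ s in Ioc 0 t, g (s - t)) := by
      rw [hset, Measure.volume_eq_prod, Measure.prod_apply_symm hTm]
      have e1 : ∫⁻ y : ℝ, volume
            ((fun x => (x, y)) ⁻¹' {p : ℝ × ℝ | p.2 ∈ Ioc 0 t ∧ p.1 ∈ Ico b (b + g (p.2 - t))})
          = ∫⁻ y : ℝ, (Ioc 0 t).indicator (fun s => ENNReal.ofReal (g (s - t))) y :=
        lintegral_congr fun s => by
          rw [hfib s]
          by_cases hs : s ∈ Ioc 0 t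
          · simp [hs, Real.volume_Ico]
          · simp [hs]
      rw [e1, lintegral_indicator measurableSet_Ioc,
        ← ofReal_integral_eq_lintegral_ofReal hint
          (Filter.Eventually.of_forall fun s => hg0 _)]
    rw [hF, hvol, ENNReal.toReal_ofReal (setIntegral_nonneg measurableSet_Ioc fun s _ => hg0 _)]
    rw [← intervalIntegral.integral_of_le ht, intervalIntegral.integral_comp_sub_right g t,
      zero_sub, sub_self, intervalIntegral.integral_of_le (neg_nonpos.mpr ht)]
  -- additivity
  have hadd : ∀ t1 t2 : ℝ, 0 ≤ t1 → t1 ≤ t2 →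
      (∫ u in Ioc (-t2) 0, g u) - (∫ u in Ioc (-t1) 0, g u) = ∫ u in Ioc (-t2) (-t1), g u := by
    intro t1 t2 h1 h12
    have hu : Ioc (-t2) (-t1) ∪ Ioc (-t1) 0 = Ioc (-t2) 0 :=
      Ioc_union_Ioc_eq_Ioc (neg_le_neg h12) (neg_nonpos.mpr h1)
    rw [← hu, setIntegral_union (Ioc_disjoint_Ioc_of_le le_rfl) measurableSet_Ioc
      hgcont.integrableOn_Ioc hgcont.integrableOn_Ioc]
    ring
  -- bounds of the integral of the monotone g over an interval
  have hIbound : ∀ a a' : ℝ, a ≤ a' →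
      (a' - a) * g a ≤ (∫ u in Ioc a a', g u) ∧ (∫ u in Ioc a a', g u) ≤ (a' - a) * g a' := by
    intro a a' h
    have hvol : (volume (Ioc a a')).toReal = a' - a := by
      rw [Real.volume_Ioc, ENNReal.toReal_ofReal (by linarith)]
    have hic : ∀ c : ℝ, IntegrableOn (fun _ : ℝ => c) (Ioc a a') volume := fun c =>
      integrableOn_const (by rw [Real.volume_Ioc]; exact ENNReal.ofReal_ne_top)
    constructor
    · have h0 := setIntegral_mono_on (hic (g a)) hgcont.integrableOn_Ioc measurableSet_Ioc
        (fun x hx => hgmono hx.1.le)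
      rw [setIntegral_const, smul_eq_mul, measureReal_def, hvol] at h0
      exact h0
    · have h0 := setIntegral_mono_on hgcont.integrableOn_Ioc (hic (g a')) measurableSet_Ioc
        (fun x hx => hgmono hx.2)
      rw [setIntegral_const, smul_eq_mul, measureReal_def, hvol] at h0
      exact h0
  have hle_C : ∀ t : ℝ, (∫ u in Ioc (-t) 0, g u) ≤ C :=
    fun t => setIntegral_mono_set hgint (Filter.Eventually.of_forall fun u => hg0 u)
      (Ioc_subset_Iic_self.eventuallyLE)
  have hGnn : ∀ t : ℝ, 0 ≤ ∫ u in Ioc (-t) 0, g u :=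
    fun t => setIntegral_nonneg measurableSet_Ioc fun u _ => hg0 u
  -- key absolute-value bound for ρ, for δ > 0
  have hrho_abs : ∀ δ : ℝ, 0 < δ →
      |ρ k δ| ≤ |F (((k:ℝ)+1)*δ) - 2 * F ((k:ℝ)*δ) + F (((k:ℝ)-1)*δ)| / (b * δ) := by
    intro δ hδ
    have hFδ : 0 ≤ F δ := by rw [hFG δ hδ.le]; exact hGnn δ
    have hbδ : 0 < b * δ := mul_pos hb' hδ
    have hden : b * δ ≤ b * δ + 2 * F δ := by linarith
    rw [hρ, abs_div, abs_of_pos (lt_of_lt_of_le hbδ hden)]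
    exact div_le_div_of_nonneg_left (abs_nonneg _) hbδ hden
  constructor
  · -- limit as δ → 0⁺
    have hbound : ∀ᶠ δ : ℝ in nhdsWithin 0 (Ioi 0),
        ‖ρ k δ‖ ≤ (g 0 - g (-(((k:ℝ)+1)*δ))) / b := by
      filter_upwards [self_mem_nhdsWithin] with δ (hδ : δ ∈ Ioi 0)
      rw [mem_Ioi] at hδ
      have h3 : 0 ≤ ((k:ℝ)-1)*δ := mul_nonneg (by linarith) hδ.le
      have h32 : ((k:ℝ)-1)*δ ≤ (k:ℝ)*δ := by nlinarith
      have h21 : (k:ℝ)*δ ≤ ((k:ℝ)+1)*δ := by nlinarith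
      have e1 : F (((k:ℝ)+1)*δ) - F ((k:ℝ)*δ) = ∫ u in Ioc (-(((k:ℝ)+1)*δ)) (-((k:ℝ)*δ)), g u := by
        rw [hFG _ (h3.trans (h32.trans h21)), hFG _ (h3.trans h32)]
        exact hadd _ _ (h3.trans h32) h21
      have e2 : F ((k:ℝ)*δ) - F (((k:ℝ)-1)*δ) = ∫ u in Ioc (-((k:ℝ)*δ)) (-(((k:ℝ)-1)*δ)), g u := by
        rw [hFG _ (h3.trans h32), hFG _ h3]
        exact hadd _ _ h3 h32
      have hb1 := hIbound (-(((k:ℝ)+1)*δ)) (-((k:ℝ)*δ)) (by linarith)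
      have hb2 := hIbound (-((k:ℝ)*δ)) (-(((k:ℝ)-1)*δ)) (by linarith)
      have hl1 : (-((k:ℝ)*δ)) - (-(((k:ℝ)+1)*δ)) = δ := by ring
      have hl2 : (-(((k:ℝ)-1)*δ)) - (-((k:ℝ)*δ)) = δ := by ring
      rw [hl1] at hb1
      rw [hl2] at hb2
      have hgtop : g (-(((k:ℝ)-1)*δ)) ≤ g 0 := hgmono (by linarith)
      have hnum : |F (((k:ℝ)+1)*δ) - 2 * F ((k:ℝ)*δ) + F (((k:ℝ)-1)*δ)|
          ≤ δ * (g 0 - g (-(((k:ℝ)+1)*δ))) := by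
        rw [abs_le]
        constructor
        · nlinarith [hb1.1, hb2.2, e1, e2]
        · nlinarith [hb1.2, hb2.1, e1, e2]
      have := (hrho_abs δ hδ).trans
        ((div_le_div_iff_of_pos_right (mul_pos hb' hδ)).mpr hnum)
      rw [Real.norm_eq_abs]
      refine this.trans (le_of_eq ?_)
      field_simp
    have hlim : Tendsto (fun δ : ℝ => (g 0 - g (-(((k:ℝ)+1)*δ))) / b)
        (nhdsWithin 0 (Ioi 0)) (nhds 0) := by
      have t1 : Tendsto (fun δ : ℝ => -(((k:ℝ)+1)*δ)) (nhds 0) (nhds 0) :=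
        ((continuous_const.mul continuous_id).neg).tendsto' 0 0 (by simp)
      have t2 : Tendsto (fun δ : ℝ => g (-(((k:ℝ)+1)*δ))) (nhds 0) (nhds (g 0)) :=
        (hgcont.tendsto 0).comp t1
      have t3 : Tendsto (fun δ : ℝ => (g 0 - g (-(((k:ℝ)+1)*δ))) / b) (nhds 0)
          (nhds ((g 0 - g 0) / b)) := (tendsto_const_nhds.sub t2).div_const b
      simpa using t3.mono_left nhdsWithin_le_nhds
    exact squeeze_zero_norm' hbound hlim
  · -- limit as δ → ∞
    have hbound : ∀ᶠ δ : ℝ in atTop, ‖ρ k δ‖ ≤ 4 * C / (b * δ) := by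
      filter_upwards [eventually_gt_atTop (0:ℝ)] with δ hδ
      have h3 : 0 ≤ ((k:ℝ)-1)*δ := mul_nonneg (by linarith) hδ.le
      have h2 : 0 ≤ (k:ℝ)*δ := by nlinarith
      have h1 : 0 ≤ ((k:ℝ)+1)*δ := by nlinarith
      have b1 := hle_C (((k:ℝ)+1)*δ); have b1' := hGnn (((k:ℝ)+1)*δ)
      have b2 := hle_C ((k:ℝ)*δ); have b2' := hGnn ((k:ℝ)*δ)
      have b3 := hle_C (((k:ℝ)-1)*δ); have b3' := hGnn (((k:ℝ)-1)*δ)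
      rw [← hFG _ h1] at b1 b1'
      rw [← hFG _ h2] at b2 b2'
      rw [← hFG _ h3] at b3 b3'
      have hnum : |F (((k:ℝ)+1)*δ) - 2 * F ((k:ℝ)*δ) + F (((k:ℝ)-1)*δ)| ≤ 4 * C := by
        rw [abs_le]; constructor <;> linarith
      rw [Real.norm_eq_abs]
      exact (hrho_abs δ hδ).trans
        ((div_le_div_iff_of_pos_right (mul_pos hb' hδ)).mpr hnum)
    have hlim : Tendsto (fun δ : ℝ => 4 * C / (b * δ)) atTop (nhds 0) := by
      have he : (fun δ : ℝ => 4 * C / (b * δ)) = fun δ : ℝ => (4 * C / b) * δ⁻¹ := by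
        funext δ
        rw [div_eq_mul_inv, mul_inv, div_eq_mul_inv]
        ring
      rw [he]
      simpa using tendsto_inv_atTop_zero.const_mul (4 * C / b)
    exact squeeze_zero_norm' hbound hlim
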